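/- Let A and B be finite connected simple graphs, let b₁, b₂ be vertices of B with d_B(b₁, b₂) = 2, and let a be any vertex of A. Then the number of edges of the Cartesian product A □ B that are closer to the vertex (a, b₁) than to the vertex (a, b₂) equals m^B_{b₁2b₂} · |V(A)| + n^B_{b₁2b₂} · |E(A)|, where m^B_{b₁2b₂} is the number of edges f of B with d(b₁, f) < d(b₂, f) and n^B_{b₁2b₂} is the number of vertices b of B with d(b, b₁) < d(b, b₂). -/

import Mathlib

open SimpleGraph

/-- Distance from a vertex to an edge (as an unordered pair): the minimum of
the distances to the two endpoints. -/
noncomputable def eDist {V : Type*} (G : SimpleGraph V) (g : V) (f : Sym2 V) : ℕ :=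
  Sym2.lift ⟨fun x y => min (G.dist g x) (G.dist g y), fun _ _ => min_comm _ _⟩ f

/-- The number of edges of `G` that are closer to `g` than to `h`. -/
noncomputable def mCloser {V : Type*} (G : SimpleGraph V) (g h : V) : ℕ :=
  {f ∈ G.edgeSet | eDist G g f < eDist G h f}.ncard

/-- The number of vertices of `G` that are closer to `g` than to `h`. -/
noncomputable def nCloser {V : Type*} (G : SimpleGraph V) (g h : V) : ℕ :=
  {a : V | G.dist a g < G.dist a h}.ncard

section Aux

variable {α β : Type*} {A : SimpleGraph α} {B : SimpleGraph β}

lemma boxProd_dist_le_walk_length (hA : A.Connected) (hB : B.Connected) :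
    ∀ {p q : α × β} (w : (A.boxProd B).Walk p q),
      A.dist p.1 q.1 + B.dist p.2 q.2 ≤ w.length := by
  intro p q w
  induction w with
  | nil => simp
  | @cons u v q h w ih =>
    rw [SimpleGraph.Walk.length_cons]
    rcases h with ⟨ha, hb⟩ | ⟨ha, hb⟩
    · calc A.dist u.1 q.1 + B.dist u.2 q.2
          ≤ (A.dist u.1 v.1 + A.dist v.1 q.1) + B.dist v.2 q.2 := by
            rw [hb]; gcongr; exact hA.dist_triangle
        _ ≤ (1 + A.dist v.1 q.1) + B.dist v.2 q.2 := by
            gcongr; exact (dist_eq_one_iff_adj.mpr ha).le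
        _ = A.dist v.1 q.1 + B.dist v.2 q.2 + 1 := by ring
        _ ≤ w.length + 1 := by gcongr
    · calc A.dist u.1 q.1 + B.dist u.2 q.2
          ≤ A.dist v.1 q.1 + (B.dist u.2 v.2 + B.dist v.2 q.2) := by
            rw [hb]; gcongr; exact hB.dist_triangle
        _ ≤ A.dist v.1 q.1 + (1 + B.dist v.2 q.2) := by
            gcongr; exact (dist_eq_one_iff_adj.mpr ha).le
        _ = A.dist v.1 q.1 + B.dist v.2 q.2 + 1 := by ring
        _ ≤ w.length + 1 := by gcongr

lemma boxProd_dist (hA : A.Connected) (hB : B.Connected) (a₁ a₂ : α) (b₁ b₂ : β) :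
    (A.boxProd B).dist (a₁, b₁) (a₂, b₂) = A.dist a₁ a₂ + B.dist b₁ b₂ := by
  refine le_antisymm ?_ ?_
  · obtain ⟨wa, hwa⟩ := hA.exists_walk_length_eq_dist a₁ a₂
    obtain ⟨wb, hwb⟩ := hB.exists_walk_length_eq_dist b₁ b₂
    have := SimpleGraph.dist_le ((wa.boxProdLeft B b₁).append (wb.boxProdRight A a₂))
    have h1 : (wa.boxProdLeft B b₁).length = wa.length := SimpleGraph.Walk.length_map _ _
    have h2 : (wb.boxProdRight A a₂).length = wb.length := SimpleGraph.Walk.length_map _ _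
    rw [SimpleGraph.Walk.length_append, h1, h2] at this
    simpa [SimpleGraph.Walk.length_append, SimpleGraph.Walk.boxProdLeft,
      SimpleGraph.Walk.boxProdRight, SimpleGraph.Walk.length_map, hwa, hwb] using this
  · obtain ⟨w, hw⟩ := (hA.boxProd hB).exists_walk_length_eq_dist (a₁, b₁) (a₂, b₂)
    rw [← hw]
    exact boxProd_dist_le_walk_length hA hB w

@[simp] lemma eDist_mk {V : Type*} (G : SimpleGraph V) (g x y : V) :
    eDist G g s(x, y) = min (G.dist g x) (G.dist g y) := rfl

lemma eDist_mapA (hA : A.Connected) (hB : B.Connected) (a : α) (b c : β) (e : Sym2 α) :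
    eDist (A.boxProd B) (a, b) (Sym2.map (fun x => (x, c)) e) =
      eDist A a e + B.dist b c := by
  induction e using Sym2.inductionOn with
  | hf x y =>
    simp [boxProd_dist hA hB, Nat.add_min_add_right]

lemma eDist_mapB (hA : A.Connected) (hB : B.Connected) (a a' : α) (b : β) (e : Sym2 β) :
    eDist (A.boxProd B) (a, b) (Sym2.map (fun y => (a', y)) e) =
      A.dist a a' + eDist B b e := by
  induction e using Sym2.inductionOn with
  | hf x y =>
    simp [boxProd_dist hA hB, Nat.add_min_add_left]

lemma ncard_prod' {γ δ : Type*} (s : Set γ) (t : Set δ) :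
    (s ×ˢ t).ncard = s.ncard * t.ncard := by
  rw [← Nat.card_coe_set_eq, ← Nat.card_coe_set_eq, ← Nat.card_coe_set_eq,
    Nat.card_congr (Equiv.Set.prod s t), Nat.card_prod]

end Aux

theorem boxProd_mCloser_right {α β : Type*} [Fintype α] [Fintype β]
    (A : SimpleGraph α) (B : SimpleGraph β)
    (hA : A.Connected) (hB : B.Connected)
    (b₁ b₂ : β) (h : B.dist b₁ b₂ = 2) (a : α) :
    mCloser (A.boxProd B) (a, b₁) (a, b₂) =
      mCloser B b₁ b₂ * Fintype.card α + nCloser B b₁ b₂ * A.edgeSet.ncard := by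
  classical
  set N : Set β := {b : β | B.dist b b₁ < B.dist b b₂} with hN
  set M : Set (Sym2 β) := {f ∈ B.edgeSet | eDist B b₁ f < eDist B b₂ f} with hM
  set T₁ : Set (Sym2 (α × β)) :=
    (fun p : α × Sym2 β => Sym2.map (fun y => (p.1, y)) p.2) '' ((Set.univ : Set α) ×ˢ M)
    with hT₁
  set T₂ : Set (Sym2 (α × β)) :=
    (fun p : β × Sym2 α => Sym2.map (fun x => (x, p.1)) p.2) '' (N ×ˢ A.edgeSet)
    with hT₂
  have hS : {f ∈ (A.boxProd B).edgeSet |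
      eDist (A.boxProd B) (a, b₁) f < eDist (A.boxProd B) (a, b₂) f} = T₁ ∪ T₂ := by
    ext f
    induction f using Sym2.inductionOn with
    | hf u v =>
      obtain ⟨u₁, u₂⟩ := u
      obtain ⟨v₁, v₂⟩ := v
      constructor
      · rintro ⟨hadj, hlt⟩
        rw [SimpleGraph.mem_edgeSet, SimpleGraph.boxProd_adj] at hadj
        rcases hadj with ⟨ha, hb⟩ | ⟨ha, hb⟩
        · -- A-type edge: second coords equal
          simp only at ha hb
          subst hb
          right
          refine ⟨(u₂, s(u₁, v₁)), ⟨?_, ha⟩, by simp [Sym2.map_pair_eq]⟩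
          have heq : (s((u₁, u₂), (v₁, u₂)) : Sym2 (α × β)) =
              Sym2.map (fun x => (x, u₂)) s(u₁, v₁) := by simp [Sym2.map_pair_eq]
          rw [heq, eDist_mapA hA hB, eDist_mapA hA hB] at hlt
          have : B.dist b₁ u₂ < B.dist b₂ u₂ := by omega
          simpa [hN, SimpleGraph.dist_comm] using this
        · -- B-type edge: first coords equal
          simp only at ha hb
          subst hb
          left
          refine ⟨(u₁, s(u₂, v₂)), ⟨Set.mem_univ _, ha, ?_⟩, by simp [Sym2.map_pair_eq]⟩
          have heq : (s((u₁, u₂), (u₁, v₂)) : Sym2 (α × β)) =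
              Sym2.map (fun y => (u₁, y)) s(u₂, v₂) := by simp [Sym2.map_pair_eq]
          rw [heq, eDist_mapB hA hB, eDist_mapB hA hB] at hlt
          show eDist B b₁ s(u₂, v₂) < eDist B b₂ s(u₂, v₂)
          omega
      · rintro (⟨⟨a', e⟩, ⟨-, hMe, hlt⟩, heq⟩ | ⟨⟨c, e⟩, ⟨hNc, hAe⟩, heq⟩)
        · induction e using Sym2.inductionOn with
          | hf x y =>
            simp only at heq
            constructor
            · rw [← heq]
              simp only [Sym2.map_pair_eq, SimpleGraph.mem_edgeSet]
              exact SimpleGraph.boxProd_adj_right.mpr (B.mem_edgeSet.mp hMe)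
            · have hlt' : eDist B b₁ s(x, y) < eDist B b₂ s(x, y) := hlt
              rw [← heq, eDist_mapB hA hB, eDist_mapB hA hB]
              omega
        · induction e using Sym2.inductionOn with
          | hf x y =>
            simp only at heq
            constructor
            · rw [← heq]
              simp only [Sym2.map_pair_eq, SimpleGraph.mem_edgeSet]
              exact SimpleGraph.boxProd_adj_left.mpr (A.mem_edgeSet.mp hAe)
            · rw [← heq, eDist_mapA hA hB, eDist_mapA hA hB]
              have hc : B.dist b₁ c < B.dist b₂ c := by
                simpa [hN, SimpleGraph.dist_comm] using hNc
              omega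
  have hdisj : Disjoint T₁ T₂ := by
    rw [Set.disjoint_left]
    rintro f ⟨⟨a', e⟩, ⟨-, he, -⟩, heq₁⟩ ⟨⟨c, e'⟩, ⟨-, he'⟩, heq₂⟩
    induction e using Sym2.inductionOn with
    | hf x y =>
      induction e' using Sym2.inductionOn with
      | hf x' y' =>
        have hxy' : x' ≠ y' := (A.mem_edgeSet.mp he').ne
        rw [← heq₂] at heq₁
        simp only [Sym2.map_pair_eq, Sym2.eq_iff, Prod.mk.injEq] at heq₁
        rcases heq₁ with ⟨⟨h1, -⟩, ⟨h2, -⟩⟩ | ⟨⟨h1, -⟩, ⟨h2, -⟩⟩ <;>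
          exact hxy' (by rw [← h1, ← h2])
  have hinj₁ : Set.InjOn (fun p : α × Sym2 β => Sym2.map (fun y => (p.1, y)) p.2)
      ((Set.univ : Set α) ×ˢ M) := by
    rintro ⟨a₁, e₁⟩ - ⟨a₂, e₂⟩ - heq
    induction e₁ using Sym2.inductionOn with
    | hf x y =>
      induction e₂ using Sym2.inductionOn with
      | hf x' y' =>
        simp only [Sym2.map_pair_eq, Sym2.eq_iff, Prod.mk.injEq] at heq
        rcases heq with ⟨⟨h1, h2⟩, -, h4⟩ | ⟨⟨h1, h2⟩, -, h4⟩ <;>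
          simp only [Prod.mk.injEq]
        · exact ⟨h1, by rw [h2, h4]⟩
        · exact ⟨h1, by rw [h2, h4, Sym2.eq_swap]⟩
  have hinj₂ : Set.InjOn (fun p : β × Sym2 α => Sym2.map (fun x => (x, p.1)) p.2)
      (N ×ˢ A.edgeSet) := by
    rintro ⟨c₁, e₁⟩ - ⟨c₂, e₂⟩ - heq
    induction e₁ using Sym2.inductionOn with
    | hf x y =>
      induction e₂ using Sym2.inductionOn with
      | hf x' y' =>
        simp only [Sym2.map_pair_eq, Sym2.eq_iff, Prod.mk.injEq] at heq
        rcases heq with ⟨⟨h1, h2⟩, h3, -⟩ | ⟨⟨h1, h2⟩, h3, -⟩ <;>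
          simp only [Prod.mk.injEq]
        · exact ⟨h2, by rw [h1, h3]⟩
        · exact ⟨h2, by rw [h1, h3, Sym2.eq_swap]⟩
  rw [mCloser, hS, Set.ncard_union_eq hdisj (Set.toFinite _) (Set.toFinite _)]
  rw [hT₁, hT₂, Set.ncard_image_of_injOn hinj₁, Set.ncard_image_of_injOn hinj₂,
    ncard_prod', ncard_prod', Set.ncard_univ, Nat.card_eq_fintype_card]
  rw [mCloser, nCloser]
  ring
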